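/- Let α > 0, let f ∈ L¹[−π,π] with f ≥ 0, let b ∈ (−π,0) ∪ (0,π), let f_H be the polarization of f with respect to b, and let u_f and u_{f_H} be the solutions of the Robin problem with heat sources f and f_H respectively. Set I = [b,π] if b > 0 and I = [−π,b] if b < 0. Then for every x ∈ I, writing x' = 2b − x, one has u_f(x) + u_f(x') ≤ u_{f_H}(x) + u_{f_H}(x'). -/

import Mathlib

open MeasureTheory Real Set

/-- The constant `c_α = α/(1+απ)`. -/
noncomputable def cA (α : ℝ) : ℝ := α / (1 + α * π)

/-- The Green's function of the Robin problem on `[-π, π]`. -/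
noncomputable def robinGreen (α x y : ℝ) : ℝ :=
  -(1/2) * cA α * x * y - (1/2) * |x - y| + 1 / (2 * cA α)

/-- The solution of the Robin problem with heat source `f`. -/
noncomputable def robinSol (α : ℝ) (f : ℝ → ℝ) (x : ℝ) : ℝ :=
  ∫ y in (-π)..π, robinGreen α x y * f y

/-- The polarization (towards zero) of `f : [-π,π] → ℝ` with respect to `b`. -/
noncomputable def polar (b : ℝ) (f : ℝ → ℝ) (x : ℝ) : ℝ :=
  if 0 < b then
    if x < 2 * b - π then f x
    else if x ≤ b then max (f x) (f (2 * b - x))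
    else min (f x) (f (2 * b - x))
  else
    if x ≤ b then min (f x) (f (2 * b - x))
    else if x ≤ 2 * b + π then max (f x) (f (2 * b - x))
    else f x

lemma contK (α x : ℝ) : Continuous (fun y => robinGreen α x y) := by
  unfold robinGreen; fun_prop

lemma green_pair_diff (α b x t : ℝ) :
    (robinGreen α x t + robinGreen α (2*b - x) t)
      - (robinGreen α x (2*b - t) + robinGreen α (2*b - x) (2*b - t))
      = 2 * cA α * b * (b - t) := by
  unfold robinGreen
  rw [show x - (2*b - t) = -((2*b - x) - t) by ring, abs_neg,
      show (2*b - x) - (2*b - t) = -(x - t) by ring, abs_neg]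
  ring

lemma mulC {G F : ℝ → ℝ} {a' b' : ℝ} (hG : Continuous G) (hab : a' ≤ b')
    (hF : IntervalIntegrable F volume a' b') :
    IntervalIntegrable (fun y => G y * F y) volume a' b' := by
  rw [intervalIntegrable_iff_integrableOn_Icc_of_le hab] at hF ⊢
  exact IntegrableOn.continuousOn_mul hG.continuousOn hF isCompact_Icc

lemma key (α : ℝ) (hα : 0 < α)
    (f : ℝ → ℝ) (hf : IntegrableOn f (Icc (-π) π))
    (b : ℝ) (hb : b ∈ Ioo 0 π) :
    ∀ x ∈ Icc b π,
      robinSol α f x + robinSol α f (2 * b - x) ≤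
        robinSol α (polar b f) x + robinSol α (polar b f) (2 * b - x) := by
  obtain ⟨hb0, hbp⟩ := hb
  intro x hx
  have hπ : (0:ℝ) < π := pi_pos
  have hca : 0 < cA α := div_pos hα (by positivity)
  have hl1 : -π ≤ 2*b - π := by linarith
  have hl2 : 2*b - π ≤ b := by linarith
  have hl3 : b ≤ π := hbp.le
  -- interval integrability of f on subintervals
  have hfi : ∀ a' b' : ℝ, -π ≤ a' → a' ≤ b' → b' ≤ π → IntervalIntegrable f volume a' b' := by
    intro a' b' h1 h2 h3
    apply IntegrableOn.intervalIntegrable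
    rw [uIcc_of_le h2]
    exact hf.mono_set (Icc_subset_Icc h1 h3)
  -- f ∘ σ integrable
  have hfσ1 : IntervalIntegrable (fun t => f (2*b - t)) volume (2*b - π) b := by
    have h := (hfi b π (by linarith) hl3 le_rfl).comp_sub_left (2*b)
    rw [show 2*b - b = b by ring] at h
    exact h.symm
  have hfσ2 : IntervalIntegrable (fun t => f (2*b - t)) volume b π := by
    have h := (hfi (2*b - π) b hl1 hl2 hl3).comp_sub_left (2*b)
    rw [show 2*b - (2*b - π) = π by ring, show 2*b - b = b by ring] at h
    exact h.symm
  -- max / min integrable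
  have hmax : IntervalIntegrable (fun t => max (f t) (f (2*b - t))) volume (2*b - π) b := by
    have h1 := hfi (2*b - π) b hl1 hl2 hl3
    rw [intervalIntegrable_iff] at h1 hfσ1 ⊢
    exact h1.sup hfσ1
  have hmin : IntervalIntegrable (fun t => min (f t) (f (2*b - t))) volume b π := by
    have h1 := hfi b π (by linarith) hl3 le_rfl
    rw [intervalIntegrable_iff] at h1 hfσ2 ⊢
    exact h1.inf hfσ2
  -- a.e. statement for left piece
  have hne : ∀ᵐ (y : ℝ), y ≠ 2*b - π := by
    refine ae_iff.2 ?_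
    have h : {y : ℝ | ¬ y ≠ 2*b - π} = {2*b - π} := by ext y; simp
    rw [h]; exact measure_singleton _
  have hgf1 : ∀ᵐ (y : ℝ), y ∈ Set.uIoc (-π) (2*b - π) → polar b f y = f y := by
    filter_upwards [hne] with y h1 h2
    rw [uIoc_of_le hl1] at h2
    have : y < 2*b - π := lt_of_le_of_ne h2.2 h1
    simp only [polar, if_pos hb0, if_pos this]
  -- polar integrable
  have hg1 : IntervalIntegrable (polar b f) volume (-π) (2*b - π) := by
    rw [intervalIntegrable_iff]
    have h0 := intervalIntegrable_iff.mp (hfi (-π) (2*b - π) le_rfl hl1 (by linarith))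
    refine (integrableOn_congr_fun_ae ?_).mp h0
    filter_upwards [hgf1.filter_mono (ae_mono Measure.restrict_le_self),
      ae_restrict_mem measurableSet_uIoc] with y hy hmem
    exact (hy hmem).symm
  have hg2 : IntervalIntegrable (polar b f) volume (2*b - π) b := by
    rw [intervalIntegrable_iff]
    refine (intervalIntegrable_iff.mp hmax).congr_fun ?_ measurableSet_uIoc
    intro t ht
    rw [uIoc_of_le hl2] at ht
    simp only [polar, if_pos hb0, if_neg (not_lt.2 ht.1.le), if_pos ht.2]
  have hg3 : IntervalIntegrable (polar b f) volume b π := by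
    rw [intervalIntegrable_iff]
    refine (intervalIntegrable_iff.mp hmin).congr_fun ?_ measurableSet_uIoc
    intro t ht
    rw [uIoc_of_le hl3] at ht
    simp only [polar, if_pos hb0, if_neg (show ¬ t < 2*b - π by push_neg; linarith [ht.1]),
      if_neg (not_le.2 ht.1)]
  -- the kernel K and the four integrands
  set K : ℝ → ℝ := fun y => robinGreen α x y + robinGreen α (2*b - x) y with hK
  have hKc : Continuous K := (contK α x).add (contK α (2*b - x))
  set F1 : ℝ → ℝ := fun s => K s * f s with hF1
  set F2 : ℝ → ℝ := fun s => K s * polar b f s with hF2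
  set M2 : ℝ → ℝ := fun s => K s * max (f s) (f (2*b - s)) with hM2
  set N2 : ℝ → ℝ := fun s => K s * min (f s) (f (2*b - s)) with hN2
  -- integrability of the products
  have iF1a : IntervalIntegrable F1 volume (-π) (2*b - π) := by
    rw [hF1]; exact mulC hKc hl1 (hfi _ _ le_rfl hl1 (by linarith))
  have iF1b : IntervalIntegrable F1 volume (2*b - π) b := by
    rw [hF1]; exact mulC hKc hl2 (hfi _ _ hl1 hl2 hl3)
  have iF1c : IntervalIntegrable F1 volume b π := by
    rw [hF1]; exact mulC hKc hl3 (hfi _ _ (by linarith) hl3 le_rfl)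
  have iF2a : IntervalIntegrable F2 volume (-π) (2*b - π) := by
    rw [hF2]; exact mulC hKc hl1 hg1
  have iF2b : IntervalIntegrable F2 volume (2*b - π) b := by
    rw [hF2]; exact mulC hKc hl2 hg2
  have iF2c : IntervalIntegrable F2 volume b π := by
    rw [hF2]; exact mulC hKc hl3 hg3
  have iM2 : IntervalIntegrable M2 volume (2*b - π) b := by
    rw [hM2]; exact mulC hKc hl2 hmax
  have iN2 : IntervalIntegrable N2 volume b π := by
    rw [hN2]; exact mulC hKc hl3 hmin
  have iF1r : IntervalIntegrable (fun t => F1 (2*b - t)) volume (2*b - π) b := by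
    have h := iF1c.comp_sub_left (2*b)
    rw [show 2*b - b = b by ring] at h
    exact h.symm
  have iN2r : IntervalIntegrable (fun t => N2 (2*b - t)) volume (2*b - π) b := by
    have h := iN2.comp_sub_left (2*b)
    rw [show 2*b - b = b by ring] at h
    exact h.symm
  -- rewrite the two sides as integrals of F1, F2
  have e1 : robinSol α f x + robinSol α f (2*b - x) = ∫ y in (-π)..π, F1 y := by
    simp only [robinSol, hF1, hK]
    rw [← intervalIntegral.integral_add
      (mulC (contK α x) (by linarith) (hfi _ _ le_rfl (by linarith) le_rfl))
      (mulC (contK α (2*b - x)) (by linarith) (hfi _ _ le_rfl (by linarith) le_rfl))]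
    simp only [add_mul]
  have e2 : robinSol α (polar b f) x + robinSol α (polar b f) (2*b - x)
      = ∫ y in (-π)..π, F2 y := by
    simp only [robinSol, hF2, hK]
    rw [← intervalIntegral.integral_add
      (mulC (contK α x) (by linarith) ((hg1.trans hg2).trans hg3))
      (mulC (contK α (2*b - x)) (by linarith) ((hg1.trans hg2).trans hg3))]
    simp only [add_mul]
  rw [e1, e2]
  -- split the integrals
  have splitf : (∫ y in (-π)..π, F1 y)
      = (∫ y in (-π)..(2*b - π), F1 y) + (∫ y in (2*b - π)..b, F1 y) + ∫ y in b..π, F1 y := by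
    rw [intervalIntegral.integral_add_adjacent_intervals iF1a iF1b,
      intervalIntegral.integral_add_adjacent_intervals (iF1a.trans iF1b) iF1c]
  have splitg : (∫ y in (-π)..π, F2 y)
      = (∫ y in (-π)..(2*b - π), F2 y) + (∫ y in (2*b - π)..b, F2 y) + ∫ y in b..π, F2 y := by
    rw [intervalIntegral.integral_add_adjacent_intervals iF2a iF2b,
      intervalIntegral.integral_add_adjacent_intervals (iF2a.trans iF2b) iF2c]
  rw [splitf, splitg]
  -- first pieces agree
  have eqa : (∫ y in (-π)..(2*b - π), F2 y) = ∫ y in (-π)..(2*b - π), F1 y := by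
    apply intervalIntegral.integral_congr_ae
    filter_upwards [hgf1] with y hy hmem
    rw [hF2, hF1]
    simp only
    rw [hy hmem]
  -- middle piece of g is the max integrand
  have eqb : (∫ y in (2*b - π)..b, F2 y) = ∫ y in (2*b - π)..b, M2 y := by
    apply intervalIntegral.integral_congr
    intro t ht
    rw [uIcc_of_le hl2] at ht
    rw [hF2, hM2]
    simp only [polar, if_pos hb0, if_neg (not_lt.2 ht.1), if_pos ht.2]
  -- last piece of g is the min integrand
  have eqc : (∫ y in b..π, F2 y) = ∫ y in b..π, N2 y := by
    apply intervalIntegral.integral_congr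
    intro t ht
    rw [uIcc_of_le hl3] at ht
    rw [hF2, hN2]
    simp only [polar, if_pos hb0]
    rcases eq_or_lt_of_le ht.1 with h | h
    · rw [if_neg (show ¬ t < 2*b - π by push_neg; linarith), if_pos (le_of_eq h.symm),
        show 2*b - t = t by rw [← h]; ring]
      simp
    · rw [if_neg (show ¬ t < 2*b - π by push_neg; linarith), if_neg (not_le.2 h)]
  -- reflect the last pieces
  have refl1 : (∫ y in b..π, F1 y) = ∫ t in (2*b - π)..b, F1 (2*b - t) := by
    rw [intervalIntegral.integral_comp_sub_left F1 (2*b),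
      show 2*b - b = b by ring, show 2*b - (2*b - π) = π by ring]
  have refl2 : (∫ y in b..π, N2 y) = ∫ t in (2*b - π)..b, N2 (2*b - t) := by
    rw [intervalIntegral.integral_comp_sub_left N2 (2*b),
      show 2*b - b = b by ring, show 2*b - (2*b - π) = π by ring]
  rw [eqa, eqb, eqc, refl1, refl2]
  -- combine middle and reflected pieces and compare
  have comb : (∫ y in (2*b - π)..b, F1 y) + (∫ t in (2*b - π)..b, F1 (2*b - t))
      ≤ (∫ y in (2*b - π)..b, M2 y) + ∫ t in (2*b - π)..b, N2 (2*b - t) := by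
    rw [← intervalIntegral.integral_add iF1b iF1r, ← intervalIntegral.integral_add iM2 iN2r]
    apply intervalIntegral.integral_mono_on hl2 (iF1b.add iF1r) (iM2.add iN2r)
    intro t ht
    rw [hF1, hM2, hN2, hK]
    simp only
    rw [show 2*b - (2*b - t) = t by ring]
    have hKd : (robinGreen α x t + robinGreen α (2*b - x) t)
        - (robinGreen α x (2*b - t) + robinGreen α (2*b - x) (2*b - t))
        = 2 * cA α * b * (b - t) := green_pair_diff α b x t
    have h1 : 0 ≤ (robinGreen α x t + robinGreen α (2*b - x) t)
        - (robinGreen α x (2*b - t) + robinGreen α (2*b - x) (2*b - t)) := by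
      rw [hKd]
      have hbt : 0 ≤ b - t := by linarith [ht.2]
      positivity
    have hM : f t ≤ max (f t) (f (2*b - t)) := le_max_left _ _
    have hmn : min (f (2*b - t)) (f t) = f (2*b - t) + f t - max (f t) (f (2*b - t)) := by
      rcases le_total (f t) (f (2*b - t)) with h | h
      · rw [max_eq_right h, min_eq_right h]; ring
      · rw [max_eq_left h, min_eq_left h]; ring
    rw [hmn]
    nlinarith [mul_nonneg h1 (sub_nonneg.2 hM)]
  linarith [comb]

lemma green_neg (α x y : ℝ) : robinGreen α (-x) (-y) = robinGreen α x y := by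
  unfold robinGreen
  rw [show -x - -y = -(x - y) by ring, abs_neg]; ring

lemma robinSol_neg (α : ℝ) (f : ℝ → ℝ) (x : ℝ) :
    robinSol α (fun y => f (-y)) (-x) = robinSol α f x := by
  unfold robinSol
  have h1 : (∫ y in (-π)..π, robinGreen α (-x) y * f (-y))
      = ∫ y in (-π)..π, (fun z => robinGreen α (-x) (-z) * f z) (-y) := by
    simp only [neg_neg]
  rw [h1, intervalIntegral.integral_comp_neg (fun z => robinGreen α (-x) (-z) * f z)]
  simp only [neg_neg, green_neg]

lemma polar_neg (b : ℝ) (hb1 : -π < b) (hb2 : b < 0) (f : ℝ → ℝ) :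
    polar (-b) (fun y => f (-y)) = fun z => polar b f (-z) := by
  funext z
  unfold polar
  rw [if_pos (by linarith : (0:ℝ) < -b), if_neg (not_lt.2 hb2.le)]
  by_cases hA : z < 2 * (-b) - π
  · rw [if_pos hA, if_neg (by linarith : ¬ -z ≤ b), if_neg (by linarith : ¬ -z ≤ 2*b + π)]
  · push_neg at hA
    by_cases hB : z ≤ -b
    · rw [if_neg (not_lt.2 hA), if_pos hB]
      beta_reduce
      rcases eq_or_lt_of_le hB with h | h
      · subst h
        rw [if_pos (by linarith : -(-b) ≤ b)]
        rw [show -(2 * (-b) - (-b)) = b by ring, show 2*b - -(-b) = b by ring, neg_neg]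
        simp
      · rw [if_neg (by linarith : ¬ -z ≤ b), if_pos (by linarith : -z ≤ 2*b + π)]
        rw [show -(2 * (-b) - z) = 2*b - -z by ring]
    · push_neg at hB
      rw [if_neg (not_lt.2 hA), if_neg (not_le.2 hB), if_pos (by linarith : -z ≤ b)]
      beta_reduce
      rw [show -(2 * (-b) - z) = 2*b - -z by ring]


/-- **Sum of values of `u_f` at reflected points is increased by polarization.** -/
theorem robinSol_add_reflected_le_polar
    (α : ℝ) (hα : 0 < α)
    (f : ℝ → ℝ) (hf : IntegrableOn f (Icc (-π) π))
    (hf0 : ∀ x ∈ Icc (-π) π, 0 ≤ f x)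
    (b : ℝ) (hb : b ∈ Ioo (-π) 0 ∪ Ioo 0 π) :
    ∀ x ∈ (if 0 < b then Icc b π else Icc (-π) b),
      robinSol α f x + robinSol α f (2 * b - x) ≤
        robinSol α (polar b f) x + robinSol α (polar b f) (2 * b - x) := by
  rcases hb with hneg | hpos
  · obtain ⟨hb1, hb2⟩ := hneg
    rw [if_neg (not_lt.2 hb2.le)]
    intro x hx
    have hπ : (0:ℝ) < π := pi_pos
    -- the reflected source
    have hfneg : IntegrableOn (fun y => f (-y)) (Icc (-π) π) := by
      have h1 : IntervalIntegrable f volume (-π) π := by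
        apply IntegrableOn.intervalIntegrable
        rw [uIcc_of_le (by linarith)]
        exact hf
      have h2 := (IntervalIntegrable.iff_comp_neg (by simp)).mp h1
      rw [← intervalIntegrable_iff_integrableOn_Icc_of_le (by linarith)]
      simpa using h2.symm
    have hkey := key α hα (fun y => f (-y)) hfneg (-b) ⟨by linarith, by linarith⟩
      (-x) ⟨by linarith [hx.2], by linarith [hx.1]⟩
    rw [show 2 * -b - -x = -(2 * b - x) by ring] at hkey
    rw [robinSol_neg α f x, robinSol_neg α f (2*b - x), polar_neg b hb1 hb2 f] at hkey
    rw [robinSol_neg α (polar b f) x, robinSol_neg α (polar b f) (2*b - x)] at hkey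
    exact hkey
  · rw [if_pos hpos.1]
    exact key α hα f hf b hpos
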